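/- arXiv:2104.04272 — 2 statements merged into one kernel-verified Lean document; each statement's English description precedes it below -/
import Mathlib

section
/- Every element of order 2 in PGL(2,ℤ) is conjugate to the image of one of the three matrices [[-1,0],[0,1]], [[0,1],[1,0]], or [[0,-1],[1,0]]. -/
open Matrix


/-- `GL(2,ℤ)`. -/
abbrev GL2Z := GL (Fin 2) ℤ

/-- `PGL(2,ℤ)`: the quotient of `GL(2,ℤ)` by its center `{±I}`. -/
abbrev PGL2Z := GL2Z ⧸ Subgroup.center GL2Z

/-- The matrix `[[-1,0],[0,1]]` as an element of `GL(2,ℤ)`. -/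
def Amat : GL2Z := ⟨!![-1, 0; 0, 1], !![-1, 0; 0, 1], by decide, by decide⟩

/-- The matrix `[[0,1],[1,0]]` as an element of `GL(2,ℤ)`. -/
def Bmat : GL2Z := ⟨!![0, 1; 1, 0], !![0, 1; 1, 0], by decide, by decide⟩

/-- The matrix `[[0,-1],[1,0]]` as an element of `GL(2,ℤ)`. -/
def Cmat : GL2Z := ⟨!![0, -1; 1, 0], !![0, 1; -1, 0], by decide, by decide⟩

abbrev M2 := Matrix (Fin 2) (Fin 2) ℤ

lemma ext2 {a b c d e f g h : ℤ} (H : !![a,b;c,d] = (!![e,f;g,h] : M2)) :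
    a = e ∧ b = f ∧ c = g ∧ d = h := by
  refine ⟨?_, ?_, ?_, ?_⟩
  · simpa using congrFun (congrFun H 0) 0
  · simpa using congrFun (congrFun H 0) 1
  · simpa using congrFun (congrFun H 1) 0
  · simpa using congrFun (congrFun H 1) 1

def Good (N : M2) : Prop :=
  ∃ g : GL2Z, ∃ t : M2,
    (t = !![-1,0;0,1] ∨ t = !![1,0;0,-1] ∨ t = !![0,1;1,0] ∨ t = !![0,-1;-1,0] ∨
      t = !![0,-1;1,0] ∨ t = !![0,1;-1,0]) ∧ g.val * N = t * g.val

lemma Good.step {N N' : M2} (h : GL2Z) (hh : h.val * N = N' * h.val) (hN' : Good N') :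
    Good N := by
  obtain ⟨g, t, ht, hg⟩ := hN'
  exact ⟨g * h, t, ht, by
    rw [Units.val_mul, mul_assoc, hh, ← mul_assoc, hg, mul_assoc]⟩

/-- T^k -/
def Tk (k : ℤ) : GL2Z :=
  ⟨!![1,k;0,1], !![1,-k;0,1], by rw [Matrix.mul_fin_two, Matrix.one_fin_two]; ring_nf,
    by rw [Matrix.mul_fin_two, Matrix.one_fin_two]; ring_nf⟩

def Sg : GL2Z := ⟨!![0,-1;1,0], !![0,1;-1,0], by decide, by decide⟩

lemma tk_move (k a b c : ℤ) :
    (Tk k).val * !![a,b;c,-a] = !![a+k*c, b-2*k*a-k*k*c; c, -(a+k*c)] * (Tk k).val := by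
  show !![1,k;0,1] * _ = _ * !![1,k;0,1]
  rw [Matrix.mul_fin_two, Matrix.mul_fin_two]; ring_nf

lemma s_move (a b c : ℤ) :
    Sg.val * !![a,b;c,-a] = !![-a,-c;-b,a] * Sg.val := by
  show !![0,-1;1,0] * _ = _ * !![0,-1;1,0]
  rw [Matrix.mul_fin_two, Matrix.mul_fin_two]; ring_nf

lemma tk_move' (k a b c a' b' : ℤ) (ha : a' = a + k*c) (hb : b' = b - 2*k*a - k*k*c) :
    (Tk k).val * !![a,b;c,-a] = !![a',b';c,-a'] * (Tk k).val := by
  subst ha hb; exact tk_move k a b c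

lemma lem_c0 (a b : ℤ) (h : a*a = 1 ∨ a*a = -1) : Good !![a,b;0,-a] := by
  have ha : a = 1 ∨ a = -1 := by
    rcases h with h|h
    · exact mul_self_eq_one_iff.mp h
    · nlinarith
  rcases ha with rfl|rfl
  · apply Good.step (Tk (b/2)) (tk_move' (b/2) 1 b 0 1 (b % 2) (by ring)
      (by rw [Int.emod_def]; ring))
    rcases Int.emod_two_eq b with h|h <;> rw [h]
    · exact ⟨1, !![1,0;0,-1], by tauto, by simp⟩
    · exact ⟨⟨!![1,0;1,1], !![1,0;-1,1], by decide, by decide⟩, !![0,1;1,0], by tauto, by decide⟩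
  · apply Good.step (Tk (-(b/2))) (tk_move' (-(b/2)) (-1) b 0 (-1) (b % 2) (by ring)
      (by rw [Int.emod_def]; ring))
    rcases Int.emod_two_eq b with h|h <;> rw [h]
    · exact ⟨1, !![-1,0;0,1], by tauto, by simp⟩
    · exact ⟨⟨!![1,0;1,-1], !![1,0;1,-1], by decide, by decide⟩, !![0,-1;-1,0], by tauto, by decide⟩

lemma balanced (c : ℤ) (hc : c ≠ 0) (a : ℤ) : ∃ k, 2 * (a + k*c).natAbs ≤ c.natAbs := by
  set d : ℤ := (c.natAbs : ℤ) with hd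
  have hdpos : 0 < d := by simp [hd]; omega
  have h0 : 0 ≤ a % d := Int.emod_nonneg a (ne_of_gt hdpos)
  have h1 : a % d < d := Int.emod_lt_of_pos a hdpos
  have hmod : a % d = a - d * (a / d) := Int.emod_def a d
  have hc' : c = d ∨ c = -d := by rw [hd]; exact Int.natAbs_eq c
  rcases hc' with h|h
  · by_cases h2 : 2 * (a % d) ≤ d
    · refine ⟨-(a/d), ?_⟩
      have hv : a + (-(a/d))*c = a % d := by rw [h]; linear_combination -hmod
      rw [hv]; omega
    · refine ⟨-(a/d) - 1, ?_⟩
      have hv : a + (-(a/d) - 1)*c = a % d - d := by rw [h]; linear_combination -hmod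
      rw [hv]; omega
  · by_cases h2 : 2 * (a % d) ≤ d
    · refine ⟨a/d, ?_⟩
      have hv : a + (a/d)*c = a % d := by rw [h]; linear_combination -hmod
      rw [hv]; omega
    · refine ⟨a/d + 1, ?_⟩
      have hv : a + (a/d + 1)*c = a % d - d := by rw [h]; linear_combination -hmod
      rw [hv]; omega

lemma descent : ∀ n : ℕ, ∀ a b c : ℤ, c.natAbs = n → (a*a + b*c = 1 ∨ a*a + b*c = -1) →
    Good !![a,b;c,-a] := by
  intro n
  induction n using Nat.strong_induction_on with
  | _ n IH =>
  intro a b c hn h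
  by_cases hc : c = 0
  · subst hc; apply lem_c0; simpa using h
  · obtain ⟨k, hk⟩ := balanced c hc a
    apply Good.step (Tk k) (tk_move k a b c)
    set a' := a + k*c with ha'
    set b' := b - 2*k*a - k*k*c with hb'
    have h' : a'*a' + b'*c = 1 ∨ a'*a' + b'*c = -1 := by
      have : a'*a' + b'*c = a*a + b*c := by rw [ha', hb']; ring
      rw [this]; exact h
    by_cases hc1 : c.natAbs = 1
    · have ha0 : a' = 0 := by omega
      rw [ha0]
      have hcv : c = 1 ∨ c = -1 := by omega
      rcases hcv with rfl|rfl <;> rcases h' with k|k <;> rw [ha0] at k <;> simp at k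
      · rw [show b' = 1 from k]; exact ⟨1, !![0,1;1,0], by tauto, by simp⟩
      · rw [show b' = -1 from k]; exact ⟨1, !![0,-1;1,0], by tauto, by simp⟩
      · rw [show b' = -1 by omega]; exact ⟨1, !![0,-1;-1,0], by tauto, by simp⟩
      · rw [show b' = 1 by omega]; exact ⟨1, !![0,1;-1,0], by tauto, by simp⟩
    · have hc2 : 2 ≤ c.natAbs := by omega
      by_cases hb0 : b' = 0
      · apply Good.step Sg (s_move a' b' c)
        rw [hb0, neg_zero]
        have h'' : (-a')*(-a') = 1 ∨ (-a')*(-a') = -1 := by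
          rcases h' with k|k
          · left; linear_combination k - c*hb0
          · right; linear_combination k - c*hb0
        simpa using lem_c0 (-a') (-c) h''
      · have h4 : 4*(a'*a') ≤ c*c := by
          have h5 : (2*a').natAbs ≤ c.natAbs := by
            rw [Int.natAbs_mul]; simpa using hk
          nlinarith [Int.natAbs_le_iff_mul_self_le.mp h5]
        have hcc : 4 ≤ c*c := by
          have : (2:ℤ).natAbs ≤ c.natAbs := by simpa using hc2
          have := Int.natAbs_le_iff_mul_self_le.mp this
          linarith
        have hb1 : 1 ≤ b'*b' := by
          have : (1:ℤ).natAbs ≤ b'.natAbs := by omega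
          have := Int.natAbs_le_iff_mul_self_le.mp this
          linarith
        have hlt : b'.natAbs < c.natAbs := by
          rw [Int.natAbs_lt_iff_mul_self_lt]
          rcases h' with k|k <;> nlinarith [k, h4, hcc, hb1, sq_nonneg (b'*c), sq_nonneg (a'*a'), sq_nonneg c, sq_nonneg b']
        apply Good.step Sg (s_move a' b' c)
        have := IH b'.natAbs (hn ▸ hlt) (-a') (-c) (-b') (by simp)
          (by rcases h' with k|k
              · exact Or.inl (by linear_combination k)
              · exact Or.inr (by linear_combination k))
        simpa using this

def Tu : GL2Z := ⟨!![1,1;0,1], !![1,-1;0,1], by decide, by decide⟩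
def Uu : GL2Z := ⟨!![1,0;1,1], !![1,0;-1,1], by decide, by decide⟩

lemma neg_one_fin_two : (-1 : M2) = !![-1,0;0,-1] := by
  rw [Matrix.one_fin_two]; ext i j; fin_cases i <;> fin_cases j <;> simp

lemma neg_one_mem_center : (-1 : GL2Z) ∈ Subgroup.center GL2Z := by
  rw [Subgroup.mem_center_iff]
  intro g
  ext : 1
  simp

lemma center_val {z : GL2Z} (hz : z ∈ Subgroup.center GL2Z) : z.val = 1 ∨ z.val = -1 := by
  have hT : Tu.val * z.val = z.val * Tu.val := by
    have := congrArg Units.val (Subgroup.mem_center_iff.mp hz Tu)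
    simpa [Units.val_mul] using this
  have hU : Uu.val * z.val = z.val * Uu.val := by
    have := congrArg Units.val (Subgroup.mem_center_iff.mp hz Uu)
    simpa [Units.val_mul] using this
  obtain ⟨p,q,r,s, he⟩ : ∃ p q r s, z.val = !![p,q;r,s] := ⟨_,_,_,_, Matrix.eta_fin_two _⟩
  rw [he] at hT hU
  rw [show Tu.val = !![1,1;0,1] from rfl, Matrix.mul_fin_two, Matrix.mul_fin_two] at hT
  rw [show Uu.val = !![1,0;1,1] from rfl, Matrix.mul_fin_two, Matrix.mul_fin_two] at hU
  obtain ⟨e1, e2, e3, e4⟩ := ext2 hT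
  obtain ⟨f1, f2, f3, f4⟩ := ext2 hU
  have hr : r = 0 := by linarith
  have hq : q = 0 := by linarith
  have hs : s = p := by linarith
  have hdet : IsUnit (z.val.det) := (Matrix.isUnit_iff_isUnit_det _).mp z.isUnit
  rw [he, hq, hr, hs, Matrix.det_fin_two_of] at hdet
  have hp : p = 1 ∨ p = -1 := by
    rcases Int.isUnit_iff.mp hdet with h|h
    · exact mul_self_eq_one_iff.mp (by linarith)
    · nlinarith
  rcases hp with rfl|rfl
  · left; rw [he, hq, hr, hs, Matrix.one_fin_two]
  · right; rw [he, hq, hr, hs, neg_one_fin_two]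

lemma mk_neg (T : GL2Z) : (QuotientGroup.mk (-T) : PGL2Z) = QuotientGroup.mk T := by
  rw [show -T = (-1) * T from (neg_one_mul T).symm, QuotientGroup.mk_mul,
    (QuotientGroup.eq_one_iff _).mpr neg_one_mem_center, one_mul]

lemma final_step (M T g : GL2Z) (hg : g.val * M.val = T.val * g.val) :
    IsConj (QuotientGroup.mk T : PGL2Z) (QuotientGroup.mk M) := by
  have hu : g * M = T * g := Units.ext (by simpa [Units.val_mul] using hg)
  have hconj : IsConj M T := isConj_iff.mpr ⟨g, by rw [hu, mul_inv_cancel_right]⟩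
  have := (QuotientGroup.mk' (Subgroup.center GL2Z)).map_isConj hconj
  simpa using this.symm


/-- Every element of order 2 in `PGL(2,ℤ)` is conjugate to the image of one of the
matrices `[[-1,0],[0,1]]`, `[[0,1],[1,0]]`, `[[0,-1],[1,0]]`. -/
theorem stmt1 (x : PGL2Z) (hx : orderOf x = 2) :
    IsConj (QuotientGroup.mk Amat : PGL2Z) x ∨
      IsConj (QuotientGroup.mk Bmat : PGL2Z) x ∨
        IsConj (QuotientGroup.mk Cmat : PGL2Z) x := by
  obtain ⟨M, rfl⟩ := QuotientGroup.mk_surjective x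
  have hx1 : (QuotientGroup.mk M : PGL2Z) ≠ 1 := by
    intro h; rw [h] at hx; simp at hx
  have hMnc : M ∉ Subgroup.center GL2Z := fun hm =>
    hx1 ((QuotientGroup.eq_one_iff M).mpr hm)
  have hsq : M ^ 2 ∈ Subgroup.center GL2Z := by
    rw [← QuotientGroup.eq_one_iff]
    have : ((M ^ 2 : GL2Z) : PGL2Z) = (QuotientGroup.mk M : PGL2Z) ^ 2 := by
      simp [QuotientGroup.mk_pow]
    rw [this]
    have h2 := pow_orderOf_eq_one (QuotientGroup.mk M : PGL2Z)
    rwa [hx] at h2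
  have hv : M.val * M.val = 1 ∨ M.val * M.val = -1 := by
    have := center_val hsq
    rwa [show (M^2).val = M.val * M.val by rw [pow_two, Units.val_mul]] at this
  obtain ⟨a,b,c,d, he⟩ : ∃ a b c d, M.val = !![a,b;c,d] := ⟨_,_,_,_, Matrix.eta_fin_two _⟩
  rw [he, Matrix.mul_fin_two] at hv
  have eqs : ∃ ε : ℤ, (ε = 1 ∨ ε = -1) ∧ a*a+b*c = ε ∧ a*b+b*d = 0 ∧ c*a+d*c = 0 ∧ c*b+d*d = ε := by
    rcases hv with h|h
    · rw [Matrix.one_fin_two] at h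
      obtain ⟨e1,e2,e3,e4⟩ := ext2 h
      exact ⟨1, Or.inl rfl, e1, e2, e3, e4⟩
    · rw [neg_one_fin_two] at h
      obtain ⟨e1,e2,e3,e4⟩ := ext2 h
      exact ⟨-1, Or.inr rfl, e1, e2, e3, e4⟩
  obtain ⟨ε, hε, e1, e2, e3, e4⟩ := eqs
  have hd : d = -a := by
    by_contra hne
    have had : a + d ≠ 0 := fun hh => hne (by linarith)
    have hb : b = 0 := by
      rcases mul_eq_zero.mp (show b * (a+d) = 0 by linarith [e2]) with h|h
      · exact h
      · exact absurd h had
    have hcz : c = 0 := by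
      rcases mul_eq_zero.mp (show c * (a+d) = 0 by linarith [e3]) with h|h
      · exact h
      · exact absurd h had
    have ha2 : a*a = ε := by rw [hb] at e1; linarith
    have hd2 : d*d = ε := by rw [hcz] at e4; linarith
    have hε1 : ε = 1 := by
      rcases hε with h|h
      · exact h
      · exfalso; rw [h] at ha2; nlinarith [sq_nonneg a]
    rw [hε1] at ha2 hd2
    have ha : a = 1 ∨ a = -1 := mul_self_eq_one_iff.mp ha2
    have hdd : d = 1 ∨ d = -1 := mul_self_eq_one_iff.mp hd2
    have had2 : d = a := by rcases ha with rfl|rfl <;> rcases hdd with rfl|rfl <;> omega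
    rcases ha with rfl|rfl
    · exact hMnc (by
        have : M = 1 := Units.ext (by
          rw [he, hb, hcz, had2, Units.val_one]; exact Matrix.one_fin_two.symm)
        rw [this]; exact Subgroup.one_mem _)
    · exact hMnc (by
        have : M = -1 := Units.ext (by
          rw [he, hb, hcz, had2, Units.val_neg, Units.val_one]
          exact neg_one_fin_two.symm)
        rw [this]; exact neg_one_mem_center)
  have heM : M.val = !![a,b;c,-a] := by rw [he, hd]
  have hG : Good !![a,b;c,-a] := by
    apply descent c.natAbs a b c rfl
    rcases hε with rfl|rfl
    · exact Or.inl e1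
    · exact Or.inr e1
  obtain ⟨g, t, ht, hg⟩ := hG
  rw [← heM] at hg
  rcases ht with rfl|rfl|rfl|rfl|rfl|rfl
  · exact Or.inl (final_step M Amat g hg)
  · refine Or.inl ?_
    have h1 : (-Amat).val = !![1,0;0,-1] := by
      rw [Units.val_neg]; show -(!![-1,0;0,1] : M2) = _
      ext i j; fin_cases i <;> fin_cases j <;> simp
    have := final_step M (-Amat) g (by rw [h1]; exact hg)
    rwa [mk_neg] at this
  · exact Or.inr (Or.inl (final_step M Bmat g hg))
  · refine Or.inr (Or.inl ?_)
    have h1 : (-Bmat).val = !![0,-1;-1,0] := by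
      rw [Units.val_neg]; show -(!![0,1;1,0] : M2) = _
      ext i j; fin_cases i <;> fin_cases j <;> simp
    have := final_step M (-Bmat) g (by rw [h1]; exact hg)
    rwa [mk_neg] at this
  · exact Or.inr (Or.inr (final_step M Cmat g hg))
  · refine Or.inr (Or.inr ?_)
    have h1 : (-Cmat).val = !![0,1;-1,0] := by
      rw [Units.val_neg]; show -(!![0,-1;1,0] : M2) = _
      ext i j; fin_cases i <;> fin_cases j <;> simp
    have := final_step M (-Cmat) g (by rw [h1]; exact hg)
    rwa [mk_neg] at this
end

section
/- The images of the matrices [[-1,0],[0,1]] and [[0,1],[1,0]] in PGL(2,ℤ) are not conjugate to each other. -/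
/-- The elementary matrix `[[1,1],[0,1]]`. -/
def Umat : GL2Z := ⟨!![1, 1; 0, 1], !![1, -1; 0, 1], by decide, by decide⟩

/-- The elementary matrix `[[1,0],[1,1]]`. -/
def Lmat : GL2Z := ⟨!![1, 0; 1, 1], !![1, 0; -1, 1], by decide, by decide⟩

/-- Reduction mod 2, `GL(2,ℤ) →* GL(2, ℤ/2)`. -/
def phi : GL2Z →* GL (Fin 2) (ZMod 2) :=
  Units.map ((RingHom.mapMatrix (Int.castRingHom (ZMod 2))).toMonoidHom)

lemma phi_val (g : GL2Z) : (phi g).val = g.val.map (Int.cast : ℤ → ZMod 2) := rfl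

/-- Central elements of `GL(2,ℤ)` are `±I`. -/
lemma center_eq (z : GL2Z) (hz : z ∈ Subgroup.center GL2Z) :
    z = 1 ∨ z = -1 := by
  rw [Subgroup.mem_center_iff] at hz
  have hU := congrArg Units.val (hz Umat)
  have hL := congrArg Units.val (hz Lmat)
  simp only [Units.val_mul] at hU hL
  set M : Matrix (Fin 2) (Fin 2) ℤ := z.val with hM
  have e10 : M 1 0 = 0 := by
    have := congrFun (congrFun hU 0) 0
    simp [Umat, Matrix.mul_apply, Fin.sum_univ_two] at this
    linarith
  have e11 : M 1 1 = M 0 0 := by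
    have := congrFun (congrFun hU 0) 1
    simp [Umat, Matrix.mul_apply, Fin.sum_univ_two] at this
    linarith
  have e01 : M 0 1 = 0 := by
    have := congrFun (congrFun hL 0) 0
    simp [Lmat, Matrix.mul_apply, Fin.sum_univ_two] at this
    linarith
  have hdet : IsUnit M.det := by
    have h1 : M * (z⁻¹).val = 1 := by
      rw [← Units.val_mul, mul_inv_cancel]; rfl
    have := congrArg Matrix.det h1
    rw [Matrix.det_mul, Matrix.det_one] at this
    exact IsUnit.of_mul_eq_one _ this
  have hunit : IsUnit (M 0 0) := by
    have hd : M.det = M 0 0 * M 0 0 := by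
      rw [Matrix.det_fin_two, e01, e10, e11]; ring
    rw [hd] at hdet
    exact (isUnit_of_mul_isUnit_left hdet)
  rcases Int.isUnit_iff.mp hunit with h | h
  · left
    apply Units.ext
    show M = 1
    ext i j
    fin_cases i <;> fin_cases j <;> simp [Matrix.one_apply, e10, e11, e01, h]
  · right
    apply Units.ext
    show M = (-1 : GL2Z).val
    have : ((-1 : GL2Z)).val = (-1 : Matrix (Fin 2) (Fin 2) ℤ) := rfl
    rw [this]
    ext i j
    fin_cases i <;> fin_cases j <;> simp [Matrix.one_apply, e10, e11, e01, h]

/-- The images of `[[-1,0],[0,1]]` and `[[0,1],[1,0]]` in `PGL(2,ℤ)` are not conjugate. -/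
theorem stmt3 :
    ¬ IsConj (QuotientGroup.mk Amat : PGL2Z) (QuotientGroup.mk Bmat : PGL2Z) := by
  rintro ⟨c, hc⟩
  obtain ⟨c', hc'⟩ := QuotientGroup.mk_surjective (c : PGL2Z)
  rw [← hc'] at hc
  have h : (QuotientGroup.mk (c' * Amat) : PGL2Z) = QuotientGroup.mk (Bmat * c') := by
    rw [QuotientGroup.mk_mul, QuotientGroup.mk_mul]
    exact hc
  have hz : (c' * Amat)⁻¹ * (Bmat * c') ∈ Subgroup.center GL2Z :=
    QuotientGroup.eq.mp h
  set z := (c' * Amat)⁻¹ * (Bmat * c') with hzdef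
  have key : Bmat * c' = c' * Amat * z := by
    rw [hzdef]; group
  have hphiA : phi Amat = 1 := by
    apply Units.ext
    rw [phi_val]
    ext i j
    fin_cases i <;> fin_cases j <;>
      simp [Amat, Matrix.map_apply, Matrix.one_apply] <;> decide
  have hphiz : phi z = 1 := by
    rcases center_eq z hz with h1 | h1
    · rw [h1]; simp
    · rw [h1]
      apply Units.ext
      rw [phi_val]
      have hval : ((-1 : GL2Z)).val = (-1 : Matrix (Fin 2) (Fin 2) ℤ) := rfl
      rw [hval]
      ext i j
      fin_cases i <;> fin_cases j <;>
        simp [Matrix.map_apply, Matrix.one_apply] <;> decide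
  have heq : phi Bmat * phi c' = 1 * phi c' := by
    rw [← map_mul, key, map_mul, map_mul, hphiA, hphiz, mul_one, mul_one, one_mul]
  have hB1 : phi Bmat = 1 := mul_right_cancel heq
  have h00 := congrArg (fun u : GL (Fin 2) (ZMod 2) => u.val 0 0) hB1
  simp only [phi_val, Matrix.map_apply, Units.val_one, Matrix.one_apply_eq] at h00
  have hb : Bmat.val 0 0 = 0 := rfl
  rw [hb] at h00
  exact absurd h00 (by decide)
end
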